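/- Let ρ : [a,b] → ℝ be integrable with 0 < ρ_min ≤ ρ(x) ≤ ρ_max < ∞ for all x ∈ [a,b], where a < b. Then the weighted average A = (∫_a^b z ρ(z) dz) / (∫_a^b ρ(z) dz) satisfies A ≤ (a + b·√(ρ_max/ρ_min)) / (1 + √(ρ_max/ρ_min)) < b. -/

import Mathlib

open MeasureTheory intervalIntegral Real

theorem stmt_0 (a b ρmin ρmax : ℝ) (ρ : ℝ → ℝ)
    (hab : a < b) (hρmin : 0 < ρmin) (hρmax : ρmin ≤ ρmax)
    (hint : IntegrableOn ρ (Set.Icc a b))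
    (hbd : ∀ x ∈ Set.Icc a b, ρmin ≤ ρ x ∧ ρ x ≤ ρmax) :
    (∫ z in a..b, z * ρ z) / (∫ z in a..b, ρ z) ≤
      (a + b * Real.sqrt (ρmax / ρmin)) / (1 + Real.sqrt (ρmax / ρmin)) ∧
    (a + b * Real.sqrt (ρmax / ρmin)) / (1 + Real.sqrt (ρmax / ρmin)) < b := by
  set r := Real.sqrt (ρmax / ρmin) with hrdef
  have hr0 : (0:ℝ) ≤ ρmax / ρmin := div_nonneg (le_trans hρmin.le hρmax) hρmin.le
  have hr1 : 1 ≤ r := by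
    rw [hrdef, show (1:ℝ) = Real.sqrt 1 by simp]
    exact Real.sqrt_le_sqrt ((one_le_div hρmin).mpr hρmax)
  have hr2 : r ^ 2 = ρmax / ρmin := Real.sq_sqrt hr0
  have h1r : (0:ℝ) < 1 + r := by linarith
  set c := (a + b * r) / (1 + r) with hcdef
  have hac : a ≤ c := by
    rw [hcdef, le_div_iff₀ h1r]; nlinarith
  have hcb : c < b := by
    rw [hcdef, div_lt_iff₀ h1r]; nlinarith
  have hcIcc : c ∈ Set.Icc a b := ⟨hac, hcb.le⟩
  -- interval integrability
  have hi1 : IntervalIntegrable ρ volume a b := by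
    rw [intervalIntegrable_iff_integrableOn_Icc_of_le hab.le]; exact hint
  have hintg : IntegrableOn (fun z => (z - c) * ρ z) (Set.Icc a b) := by
    apply Integrable.bdd_mul (c := b - a) hint
      ((continuous_id.sub continuous_const).aestronglyMeasurable)
    refine (ae_restrict_mem measurableSet_Icc).mono fun x hx => ?_
    show ‖x - c‖ ≤ b - a
    rw [Real.norm_eq_abs, abs_le]
    exact ⟨by linarith [hx.1, hcb.le], by linarith [hx.2, hac]⟩
  have hig : IntervalIntegrable (fun z => (z - c) * ρ z) volume a b := by
    rw [intervalIntegrable_iff_integrableOn_Icc_of_le hab.le]; exact hintg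
  have hig_ac : IntervalIntegrable (fun z => (z - c) * ρ z) volume a c :=
    hig.mono_set (by rw [Set.uIcc_of_le hac, Set.uIcc_of_le hab.le]; exact Set.Icc_subset_Icc le_rfl hcb.le)
  have hig_cb : IntervalIntegrable (fun z => (z - c) * ρ z) volume c b :=
    hig.mono_set (by rw [Set.uIcc_of_le hcb.le, Set.uIcc_of_le hab.le]; exact Set.Icc_subset_Icc hac le_rfl)
  have hiz : IntervalIntegrable (fun z => z * ρ z) volume a b := by
    have : (fun z => z * ρ z) = fun z => (z - c) * ρ z + c * ρ z := by
      funext z; ring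
    rw [this]; exact hig.add (hi1.const_mul c)
  -- the key inequality
  have hkey2 : ρmin * (c - a) ^ 2 = ρmax * (b - c) ^ 2 := by
    have hca : c - a = r * (b - a) / (1 + r) := by
      rw [hcdef]; field_simp; ring
    have hbc : b - c = (b - a) / (1 + r) := by
      rw [hcdef]; field_simp; ring
    have hrr : ρmin * r ^ 2 = ρmax := by
      rw [hr2]; field_simp
    rw [hca, hbc]
    field_simp
    nlinarith [hrr, sq_nonneg (b - a), sq_nonneg r]
  have h1 : ∫ z in a..c, (z - c) * ρ z ≤ ∫ z in a..c, (z - c) * ρmin := by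
    apply intervalIntegral.integral_mono_on hac hig_ac
      (((continuous_id.sub continuous_const).mul continuous_const).intervalIntegrable a c)
    intro x hx
    exact mul_le_mul_of_nonpos_left (hbd x ⟨hx.1, le_trans hx.2 hcb.le⟩).1
      (by linarith [hx.2])
  have h2 : ∫ z in c..b, (z - c) * ρ z ≤ ∫ z in c..b, (z - c) * ρmax := by
    apply intervalIntegral.integral_mono_on hcb.le hig_cb
      (((continuous_id.sub continuous_const).mul continuous_const).intervalIntegrable c b)
    intro x hx
    exact mul_le_mul_of_nonneg_left (hbd x ⟨le_trans hac hx.1, hx.2⟩).2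
      (by linarith [hx.1])
  have hm1 : ∫ z in a..c, (z - c) * ρmin = -(ρmin * (c - a) ^ 2) / 2 := by
    rw [intervalIntegral.integral_mul_const,
      intervalIntegral.integral_sub intervalIntegrable_id (intervalIntegrable_const),
      integral_id, intervalIntegral.integral_const]
    simp only [smul_eq_mul]; ring
  have hm2 : ∫ z in c..b, (z - c) * ρmax = (ρmax * (b - c) ^ 2) / 2 := by
    rw [intervalIntegral.integral_mul_const,
      intervalIntegral.integral_sub intervalIntegrable_id (intervalIntegrable_const),
      integral_id, intervalIntegral.integral_const]
    simp only [smul_eq_mul]; ring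
  have key : ∫ z in a..b, (z - c) * ρ z ≤ 0 := by
    rw [← intervalIntegral.integral_add_adjacent_intervals hig_ac hig_cb]
    rw [hm1] at h1; rw [hm2] at h2
    linarith
  have hden : (0:ℝ) < ∫ z in a..b, ρ z := by
    have hmono : ∫ z in a..b, (ρmin : ℝ) ≤ ∫ z in a..b, ρ z :=
      intervalIntegral.integral_mono_on hab.le (intervalIntegrable_const) hi1
        (fun x hx => (hbd x hx).1)
    rw [intervalIntegral.integral_const, smul_eq_mul] at hmono
    nlinarith
  have hnum : ∫ z in a..b, z * ρ z ≤ c * ∫ z in a..b, ρ z := by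
    have hrw : ∫ z in a..b, (z - c) * ρ z
        = (∫ z in a..b, z * ρ z) - c * ∫ z in a..b, ρ z := by
      simp only [sub_mul]
      rw [intervalIntegral.integral_sub hiz (hi1.const_mul c),
        intervalIntegral.integral_const_mul]
    rw [hrw] at key; linarith
  constructor
  · rw [div_le_iff₀ hden]
    calc _ ≤ c * ∫ z in a..b, ρ z := hnum
    _ = _ := by rw [hcdef]
  · rw [div_lt_iff₀ h1r]; nlinarith
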